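/- Let Ω ⊂ ℝⁿ be bounded with first Dirichlet eigenvalue λ₁ > 0, α > 2, β ≥ 0, σ > 0, and f with F(u) = ∫₀ᵘ f(s)ds satisfying α(F(u) − σ) ≤ u f(u) + β u². Let J(u) = ½‖∇u‖² − ∫_Ω(F(u) − σ), I_δ(u) = δ‖∇u‖² − ∫_Ω u f(u). Then for every u ∈ H¹₀(Ω) and 0 < δ < α/2 − β/λ₁: J(u) ≥ a(δ)‖∇u‖² + (1/α)I_δ(u), where a(δ) = ½ − δ/α − β/(λ₁α) > 0. In particular, if J(u) ≤ d and I_δ(u) > 0 then ‖∇u‖² < d/a(δ). -/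

import Mathlib

open MeasureTheory Set

/-- `g` stands for the gradient norm `‖∇u‖_{L²}`; the Poincaré inequality
`‖u‖² ≤ λ₁⁻¹ ‖∇u‖²` is encoded as `∫ u² ≤ g²/λ₁`. -/
theorem stmt_12 {Ω : Type*} [MeasurableSpace Ω] (μ : Measure Ω) [IsFiniteMeasure μ]
    (f F : ℝ → ℝ) (u : Ω → ℝ) (α β σ lam1 δ g d : ℝ)
    (hα : 2 < α) (hβ : 0 ≤ β) (hσ : 0 < σ) (hlam1 : 0 < lam1)
    (hbl : 2 * β < lam1 * (α - 2))
    (hcond : ∀ v : ℝ, α * (F v - σ) ≤ v * f v + β * v ^ 2)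
    (hg0 : 0 ≤ g)
    (hpoinc : ∫ x, (u x) ^ 2 ∂μ ≤ g ^ 2 / lam1)
    (hint1 : Integrable (fun x => F (u x) - σ) μ)
    (hint2 : Integrable (fun x => u x * f (u x)) μ)
    (hint3 : Integrable (fun x => (u x) ^ 2) μ)
    (hδ : 0 < δ) (hδ2 : δ < α / 2 - β / lam1)
    (hd : 0 < d) :
    (1 / 2 - δ / α - β / (lam1 * α)) * g ^ 2
        + (1 / α) * (δ * g ^ 2 - ∫ x, u x * f (u x) ∂μ)
      ≤ g ^ 2 / 2 - (∫ x, (F (u x) - σ) ∂μ) ∧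
    (g ^ 2 / 2 - (∫ x, (F (u x) - σ) ∂μ) ≤ d →
      0 < δ * g ^ 2 - (∫ x, u x * f (u x) ∂μ) →
      g ^ 2 < d / (1 / 2 - δ / α - β / (lam1 * α))) := by
  have hα0 : (0:ℝ) < α := by linarith
  -- integrate the pointwise condition
  have hmono : ∫ x, α * (F (u x) - σ) ∂μ ≤ ∫ x, (u x * f (u x) + β * (u x) ^ 2) ∂μ :=
    integral_mono (hint1.const_mul α) (hint2.add (hint3.const_mul β))
      (fun x => hcond (u x))
  rw [MeasureTheory.integral_const_mul, integral_add hint2 (hint3.const_mul β),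
    MeasureTheory.integral_const_mul] at hmono
  have hβu : β * ∫ x, (u x) ^ 2 ∂μ ≤ β * (g ^ 2 / lam1) :=
    mul_le_mul_of_nonneg_left hpoinc hβ
  have key : α * ∫ x, (F (u x) - σ) ∂μ ≤ (∫ x, u x * f (u x) ∂μ) + β * (g ^ 2 / lam1) := by
    linarith
  have hfirst : (1 / 2 - δ / α - β / (lam1 * α)) * g ^ 2
        + (1 / α) * (δ * g ^ 2 - ∫ x, u x * f (u x) ∂μ)
      ≤ g ^ 2 / 2 - (∫ x, (F (u x) - σ) ∂μ) := by
    have h1 : ∫ x, (F (u x) - σ) ∂μ ≤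
        ((∫ x, u x * f (u x) ∂μ) + β * (g ^ 2 / lam1)) / α := by
      rw [le_div_iff₀ hα0]; linarith
    have hexp : (1 / 2 - δ / α - β / (lam1 * α)) * g ^ 2
        + (1 / α) * (δ * g ^ 2 - ∫ x, u x * f (u x) ∂μ)
        = g ^ 2 / 2 - ((∫ x, u x * f (u x) ∂μ) + β * (g ^ 2 / lam1)) / α := by
      field_simp
      ring
    linarith
  refine ⟨hfirst, fun hJ hI => ?_⟩
  have ha : 0 < 1 / 2 - δ / α - β / (lam1 * α) := by
    have hmul := mul_lt_mul_of_pos_right hδ2 hlam1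
    have hb : (α / 2 - β / lam1) * lam1 = lam1 * α / 2 - β := by field_simp
    have he : 1 / 2 - δ / α - β / (lam1 * α) = (lam1 * α / 2 - δ * lam1 - β) / (lam1 * α) := by
      field_simp
    rw [he]
    apply div_pos _ (by positivity)
    nlinarith
  have hlt : (1 / 2 - δ / α - β / (lam1 * α)) * g ^ 2 < d := by
    have : (0:ℝ) < (1 / α) * (δ * g ^ 2 - ∫ x, u x * f (u x) ∂μ) :=
      mul_pos (by positivity) hI
    linarith
  exact (lt_div_iff₀ ha).mpr (by linarith [hlt])
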